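/- Let E ∈ ℝ² with E ≠ 0, let R, X ∈ ℝ with R ≠ 0 and X ≠ 0, let Imax > 0, and let M₁ ≠ M₂ be two distinct matrices from {M_P, M_Q, M_V}. Let f₀ : ℝ² → ℝ be convex and differentiable, let ρ > 0, and define f on 3×3 real symmetric matrices by f(W) := f₀(Tr(M₁W), Tr(M₂W)) + ρ·Tr(W). Suppose the gradient of f (with respect to the Frobenius inner product ⟨A,B⟩ = Tr(AᵀB)) is Lipschitz continuous with constant L > 0, and let 0 < α ≤ 1/L. Let W_k ∈ 𝒲, let W_PGD be the unique element of 𝒲 minimizing the Frobenius distance to W_k − α∇f(W_k), and let W_{k+1} be any element of rank at most 1 minimizing Tr(W) over { W ∈ 𝒲 : Tr(M₁W) = Tr(M₁W_PGD) and Tr(M₂W) = Tr(M₂W_PGD) }. Then f(W_{k+1}) ≤ f(W_PGD) ≤ f(W_k); moreover, if f(W_{k+1}) = f(W_k), then W_k is a global minimizer of f over 𝒲. -/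

import Mathlib

/-- The matrix `J` with rows `(0,1)` and `(-1,0)`. -/
def Jmat : Matrix (Fin 2) (Fin 2) ℝ := !![0, 1; -1, 0]

/-- The impedance matrix `Z` with rows `(R,-X)` and `(X,R)`. -/
def Zmat (R X : ℝ) : Matrix (Fin 2) (Fin 2) ℝ := !![R, -X; X, R]

/-- Interpret a plain vector `Fin 2 → ℝ` as an element of Euclidean space `ℝ²`. -/
noncomputable def toE (v : Fin 2 → ℝ) : EuclideanSpace ℝ (Fin 2) := WithLp.toLp 2 v

/-- The vector `J E ∈ ℝ²`. -/
noncomputable def Jv (E : EuclideanSpace ℝ (Fin 2)) : EuclideanSpace ℝ (Fin 2) :=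
  toE (Jmat.mulVec (fun i => E i))

/-- The vector `Zᵀ E ∈ ℝ²`. -/
noncomputable def ZtE (R X : ℝ) (E : EuclideanSpace ℝ (Fin 2)) : EuclideanSpace ℝ (Fin 2) :=
  toE ((Zmat R X).transpose.mulVec (fun i => E i))

/-- `M(α, a, ζ)`: the 3×3 symmetric matrix with top-left 2×2 block `α·I₂`,
top-right column `a/2`, bottom-left row `aᵀ/2`, and bottom-right entry `ζ`. -/
noncomputable def Mmat (α : ℝ) (a : EuclideanSpace ℝ (Fin 2)) (ζ : ℝ) :
    Matrix (Fin 3) (Fin 3) ℝ :=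
  !![α, 0, a 0 / 2; 0, α, a 1 / 2; a 0 / 2, a 1 / 2, ζ]

/-- `M_P := M(3R/2, (3/2)E, 0)`. -/
noncomputable def MP (E : EuclideanSpace ℝ (Fin 2)) (R : ℝ) : Matrix (Fin 3) (Fin 3) ℝ :=
  Mmat (3 * R / 2) ((3 / 2 : ℝ) • E) 0

/-- `M_Q := M(3X/2, (3/2)JE, 0)`. -/
noncomputable def MQ (E : EuclideanSpace ℝ (Fin 2)) (X : ℝ) : Matrix (Fin 3) (Fin 3) ℝ :=
  Mmat (3 * X / 2) ((3 / 2 : ℝ) • Jv E) 0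

/-- `M_V := M(R² + X², 2ZᵀE, ‖E‖²)`. -/
noncomputable def MV (E : EuclideanSpace ℝ (Fin 2)) (R X : ℝ) : Matrix (Fin 3) (Fin 3) ℝ :=
  Mmat (R ^ 2 + X ^ 2) ((2 : ℝ) • ZtE R X E) (‖E‖ ^ 2)

/-- The space of 3×3 real matrices equipped with the Frobenius inner product,
realized as the Euclidean space on the entries (so that `⟪A, B⟫ = Tr(AᵀB)`). -/
abbrev FrobSpace : Type := EuclideanSpace ℝ (Fin 3 × Fin 3)

/-- View an element of the Frobenius space as a matrix. -/
noncomputable def toM (W : FrobSpace) : Matrix (Fin 3) (Fin 3) ℝ :=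
  Matrix.of fun i j => W (i, j)

/-- The SDP feasible set `𝒲`, as a subset of the Frobenius inner-product space:
symmetric (Hermitian) positive semidefinite matrices with
`W₁₁ + W₂₂ ≤ Imax²` and `W₃₃ = 1`. -/
def WsetE (Imax : ℝ) : Set FrobSpace :=
  {W | (toM W).PosSemidef ∧ (toM W) 0 0 + (toM W) 1 1 ≤ Imax ^ 2 ∧ (toM W) 2 2 = 1}


section AuxGradient

open Set InnerProductSpace
open scoped RealInnerProductSpace

variable {F : Type*} [NormedAddCommGroup F] [InnerProductSpace ℝ F] [CompleteSpace F]

lemma line_hasDerivAt' (f : F → ℝ) (hd : Differentiable ℝ f) (x d : F) (t : ℝ) :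
    HasDerivAt (fun s : ℝ => f (x + s • d)) ⟪gradient f (x + t • d), d⟫ t := by
  have hline : HasDerivAt (fun s : ℝ => x + s • d) d t := by
    simpa using ((hasDerivAt_id t).smul_const d).const_add x
  have hg := (hd (x + t • d)).hasGradientAt
  have := hg.hasFDerivAt.comp_hasDerivAt t hline
  rw [toDual_apply_apply] at this
  exact this

/-- Descent lemma for functions with Lipschitz gradient. -/
lemma descent_lemma' (f : F → ℝ) (hd : Differentiable ℝ f) (L : NNReal)
    (hlip : LipschitzWith L (fun W => gradient f W)) (x y : F) :
    f y ≤ f x + ⟪gradient f x, y - x⟫ + (L : ℝ) / 2 * ‖y - x‖ ^ 2 := by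
  set d := y - x with hdd
  set φ' : ℝ → ℝ := fun t => ⟪gradient f (x + t • d), d⟫ with hφ'
  have hφ : ∀ t : ℝ, HasDerivAt (fun s : ℝ => f (x + s • d)) (φ' t) t :=
    fun t => line_hasDerivAt' f hd x d t
  have hgc : Continuous fun W => gradient f W := hlip.continuous
  have hcont : Continuous φ' := by
    apply Continuous.inner
    · exact hgc.comp (by continuity)
    · exact continuous_const
  have hint : ∫ t in (0:ℝ)..1, φ' t = f (x + (1:ℝ) • d) - f (x + (0:ℝ) • d) :=
    intervalIntegral.integral_eq_sub_of_hasDerivAt (fun t _ => hφ t)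
      (hcont.intervalIntegrable 0 1)
  have hi1 : IntervalIntegrable (fun t : ℝ => (L : ℝ) * ‖d‖ ^ 2 * t)
      MeasureTheory.volume 0 1 :=
    ((continuous_const.mul continuous_id') :
      Continuous fun t : ℝ => (L : ℝ) * ‖d‖ ^ 2 * t).intervalIntegrable 0 1
  have hbound : ∀ t ∈ Icc (0:ℝ) 1, φ' t ≤ φ' 0 + (L : ℝ) * ‖d‖ ^ 2 * t := by
    intro t ht
    have h1 : φ' t - φ' 0 = ⟪gradient f (x + t • d) - gradient f (x + (0:ℝ) • d), d⟫ := by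
      rw [inner_sub_left]
    have h2 : ⟪gradient f (x + t • d) - gradient f (x + (0:ℝ) • d), d⟫
        ≤ ‖gradient f (x + t • d) - gradient f (x + (0:ℝ) • d)‖ * ‖d‖ :=
      real_inner_le_norm _ _
    have h3 : ‖gradient f (x + t • d) - gradient f (x + (0:ℝ) • d)‖
        ≤ (L : ℝ) * ‖t • d‖ := by
      have := hlip.dist_le_mul (x + t • d) (x + (0:ℝ) • d)
      simpa [dist_eq_norm, add_sub_add_left_eq_sub, zero_smul, sub_zero] using this
    have h4 : ‖t • d‖ = t * ‖d‖ := by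
      rw [norm_smul, Real.norm_eq_abs, abs_of_nonneg ht.1]
    have h5 : φ' t - φ' 0 ≤ (L : ℝ) * ‖t • d‖ * ‖d‖ :=
      h1 ▸ h2.trans (mul_le_mul_of_nonneg_right h3 (norm_nonneg d))
    rw [h4] at h5
    have h6 : (L : ℝ) * (t * ‖d‖) * ‖d‖ = (L : ℝ) * ‖d‖ ^ 2 * t := by ring
    linarith
  have hmono : ∫ t in (0:ℝ)..1, φ' t
      ≤ ∫ t in (0:ℝ)..1, (φ' 0 + (L : ℝ) * ‖d‖ ^ 2 * t) :=
    intervalIntegral.integral_mono_on zero_le_one (hcont.intervalIntegrable 0 1)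
      (intervalIntegrable_const.add hi1) hbound
  have hrhs : ∫ t in (0:ℝ)..1, (φ' 0 + (L : ℝ) * ‖d‖ ^ 2 * t)
      = φ' 0 + (L : ℝ) * ‖d‖ ^ 2 / 2 := by
    rw [intervalIntegral.integral_add intervalIntegrable_const hi1,
      intervalIntegral.integral_const, intervalIntegral.integral_const_mul, integral_id]
    norm_num
    ring
  have h0 : φ' 0 = ⟪gradient f x, d⟫ := by simp [hφ']
  have hy : x + (1:ℝ) • d = y := by simp [hdd]
  have hx0 : x + (0:ℝ) • d = x := by simp
  rw [hy, hx0] at hint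
  rw [hrhs, hint, h0] at hmono
  linarith

/-- First-order condition for convex differentiable functions. -/
lemma convex_first_order' (f : F → ℝ) (hconv : ConvexOn ℝ Set.univ f)
    (hd : Differentiable ℝ f) (x y : F) :
    f x + ⟪gradient f x, y - x⟫ ≤ f y := by
  set d := y - x with hdd
  have hφconv : ConvexOn ℝ Set.univ (fun t : ℝ => f (x + t • d)) := by
    have h := hconv.comp_affineMap (AffineMap.lineMap x y : ℝ →ᵃ[ℝ] F)
    have he : (fun t : ℝ => f (x + t • d)) = f ∘ (AffineMap.lineMap x y : ℝ →ᵃ[ℝ] F) := by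
      funext t
      have : x + t • d = AffineMap.lineMap x y t := by
        rw [AffineMap.lineMap_apply_module, hdd]; module
      rw [Function.comp_apply, this]
    rw [he]
    simpa using h
  have hder : HasDerivAt (fun t : ℝ => f (x + t • d)) ⟪gradient f x, d⟫ 0 := by
    have h := line_hasDerivAt' f hd x d 0
    simpa using h
  have hslope := hφconv.le_slope_of_hasDerivAt (mem_univ (0:ℝ)) (mem_univ (1:ℝ))
    zero_lt_one hder
  rw [slope_def_field] at hslope
  have e0 : x + (0:ℝ) • d = x := by simp
  have e1 : x + (1:ℝ) • d = y := by simp [hdd]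
  simp only [e0, e1] at hslope
  norm_num at hslope
  have : ⟪gradient f x, d⟫ = fderiv ℝ f x d := by
    simp [gradient, InnerProductSpace.toDual_symm_apply]
  linarith

end AuxGradient

lemma toM_comb (a b : ℝ) (W V : FrobSpace) :
    toM (a • W + b • V) = a • toM W + b • toM V := by
  ext i j; simp [toM]

lemma diff_traceM (M : Matrix (Fin 3) (Fin 3) ℝ) :
    Differentiable ℝ (fun W : FrobSpace => (M * toM W).trace) := by
  have h : (fun W : FrobSpace => (M * toM W).trace)
      = fun W : FrobSpace => ∑ i : Fin 3, ∑ j : Fin 3, M i j * W (j, i) := by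
    funext W; simp [Matrix.trace, Matrix.mul_apply, toM, Matrix.diag]
  rw [h]
  exact Differentiable.fun_sum fun i _ => Differentiable.fun_sum fun j _ =>
    (by simpa using ((EuclideanSpace.proj (𝕜 := ℝ) ((j, i) : Fin 3 × Fin 3)).differentiable).const_mul (M i j))

lemma diff_trace :
    Differentiable ℝ (fun W : FrobSpace => (toM W).trace) := by
  have h : (fun W : FrobSpace => (toM W).trace)
      = fun W : FrobSpace => ∑ i : Fin 3, W (i, i) := by
    funext W; simp [Matrix.trace, toM, Matrix.diag]
  rw [h]
  exact Differentiable.fun_sum fun i _ =>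
    (by simpa using (EuclideanSpace.proj (𝕜 := ℝ) ((i, i) : Fin 3 × Fin 3)).differentiable)

lemma Wset_convex (Imax : ℝ) : Convex ℝ (WsetE Imax) := by
  rintro W ⟨hWp, hW12, hW3⟩ V ⟨hVp, hV12, hV3⟩ a b ha hb hab
  have hcomb := toM_comb a b W V
  refine ⟨?_, ?_, ?_⟩
  · rw [hcomb]
    constructor
    · have h1 := hWp.1
      have h2 := hVp.1
      simp only [Matrix.IsHermitian] at h1 h2 ⊢
      rw [Matrix.conjTranspose_add, Matrix.conjTranspose_smul, Matrix.conjTranspose_smul,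
        h1, h2]
      simp
    · intro x
      have h1 := hWp.2 x
      have h2 := hVp.2 x
      exact ((hWp.smul ha).add (hVp.smul hb)).2 x
  · have e00 : toM (a • W + b • V) 0 0 = a * toM W 0 0 + b * toM V 0 0 := by
      rw [hcomb]; simp [Matrix.add_apply, Matrix.smul_apply, smul_eq_mul]
    have e11 : toM (a • W + b • V) 1 1 = a * toM W 1 1 + b * toM V 1 1 := by
      rw [hcomb]; simp [Matrix.add_apply, Matrix.smul_apply, smul_eq_mul]
    rw [e00, e11]
    have hWle := mul_le_mul_of_nonneg_left hW12 ha
    have hVle := mul_le_mul_of_nonneg_left hV12 hb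
    nlinarith
  · have e22 : toM (a • W + b • V) 2 2 = a * toM W 2 2 + b * toM V 2 2 := by
      rw [hcomb]; simp [Matrix.add_apply, Matrix.smul_apply, smul_eq_mul]
    rw [e22, hW3, hV3]; linarith

open scoped RealInnerProductSpace

set_option maxHeartbeats 1000000

/-- one-step descent form of Theorem 2: each iteration of the modified
projected gradient descent controller — a projected gradient step followed by a rank-1
trace-minimal adjustment preserving the outputs `Tr(M₁·), Tr(M₂·)` — does not increase
the objective `f(W) = f₀(Tr(M₁W), Tr(M₂W)) + ρ·Tr(W)`, and the objective stalls only at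
a global minimizer of `f` over `𝒲`. -/
theorem stmt16 (E : EuclideanSpace ℝ (Fin 2)) (hE : E ≠ 0) (R X : ℝ)
    (hR : R ≠ 0) (hX : X ≠ 0) (Imax : ℝ) (hI : 0 < Imax)
    (M₁ M₂ : Matrix (Fin 3) (Fin 3) ℝ)
    (hM₁ : M₁ ∈ ({MP E R, MQ E X, MV E R X} : Set (Matrix (Fin 3) (Fin 3) ℝ)))
    (hM₂ : M₂ ∈ ({MP E R, MQ E X, MV E R X} : Set (Matrix (Fin 3) (Fin 3) ℝ)))
    (hMne : M₁ ≠ M₂)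
    (f₀ : ℝ × ℝ → ℝ) (hf₀conv : ConvexOn ℝ Set.univ f₀) (hf₀diff : Differentiable ℝ f₀)
    (ρ : ℝ) (hρ : 0 < ρ)
    (f : FrobSpace → ℝ)
    (hf : f = fun W => f₀ ((M₁ * toM W).trace, (M₂ * toM W).trace) + ρ * (toM W).trace)
    (L : NNReal) (hL : 0 < L)
    (hlip : LipschitzWith L (fun W => gradient f W))
    (α : ℝ) (hα₀ : 0 < α) (hαL : α ≤ 1 / (L : ℝ))
    (Wk : FrobSpace) (hWk : Wk ∈ WsetE Imax)
    (WPGD : FrobSpace) (hWPGD : WPGD ∈ WsetE Imax)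
    (hproj : ∀ W ∈ WsetE Imax,
      ‖WPGD - (Wk - α • gradient f Wk)‖ ≤ ‖W - (Wk - α • gradient f Wk)‖)
    (Wnext : FrobSpace)
    (hWnext : Wnext ∈ WsetE Imax ∧ (toM Wnext).rank ≤ 1 ∧
      (M₁ * toM Wnext).trace = (M₁ * toM WPGD).trace ∧
      (M₂ * toM Wnext).trace = (M₂ * toM WPGD).trace)
    (hWnextMin : ∀ W ∈ WsetE Imax,
      (M₁ * toM W).trace = (M₁ * toM WPGD).trace →
      (M₂ * toM W).trace = (M₂ * toM WPGD).trace →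
      (toM Wnext).trace ≤ (toM W).trace) :
    f Wnext ≤ f WPGD ∧ f WPGD ≤ f Wk ∧
      (f Wnext = f Wk → ∀ W ∈ WsetE Imax, f Wk ≤ f W) := by
  classical
  -- differentiability of f
  have hfdiff : Differentiable ℝ f := by
    rw [hf]
    exact (hf₀diff.comp ((diff_traceM M₁).prodMk (diff_traceM M₂))).add
      (diff_trace.const_mul ρ)
  -- convexity of f
  have hfconv : ConvexOn ℝ Set.univ f := by
    rw [hf]
    refine ⟨convex_univ, fun W _ V _ a b ha hb hab => ?_⟩
    have hM : ∀ M : Matrix (Fin 3) (Fin 3) ℝ,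
        (M * toM (a • W + b • V)).trace = a * (M * toM W).trace + b * (M * toM V).trace := by
      intro M
      rw [toM_comb, mul_add, Matrix.mul_smul, Matrix.mul_smul, Matrix.trace_add,
        Matrix.trace_smul, Matrix.trace_smul]
      simp
    have htr : (toM (a • W + b • V)).trace = a * (toM W).trace + b * (toM V).trace := by
      rw [toM_comb, Matrix.trace_add, Matrix.trace_smul, Matrix.trace_smul]; simp
    have h₀ := hf₀conv.2 (Set.mem_univ ((M₁ * toM W).trace, (M₂ * toM W).trace))
      (Set.mem_univ ((M₁ * toM V).trace, (M₂ * toM V).trace)) ha hb hab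
    simp only [Prod.smul_mk, Prod.mk_add_mk, smul_eq_mul] at h₀
    dsimp only
    rw [hM M₁, hM M₂, htr]
    simp only [smul_eq_mul]
    have hring : ρ * (a * (toM W).trace + b * (toM V).trace)
        = a * (ρ * (toM W).trace) + b * (ρ * (toM V).trace) := by ring
    nlinarith [h₀]
  -- Part 1 : f Wnext ≤ f WPGD
  obtain ⟨hWnextW, hrank, htr1, htr2⟩ := hWnext
  have htrle : (toM Wnext).trace ≤ (toM WPGD).trace := hWnextMin WPGD hWPGD rfl rfl
  have h1 : f Wnext ≤ f WPGD := by
    rw [hf]; dsimp only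
    rw [htr1, htr2]
    exact add_le_add_right (mul_le_mul_of_nonneg_left htrle hρ.le) _
  -- projection characterization
  have hKconv : Convex ℝ (WsetE Imax) := Wset_convex Imax
  obtain ⟨u, hu⟩ : ∃ u : FrobSpace, u = Wk - α • gradient f Wk := ⟨_, rfl⟩
  rw [← hu] at hproj
  have hchar : ∀ W ∈ WsetE Imax, ⟪u - WPGD, W - WPGD⟫ ≤ 0 := by
    intro W hW
    have hkey : ∀ t : ℝ, 0 ≤ t → t ≤ 1 →
        2 * t * ⟪u - WPGD, W - WPGD⟫ ≤ t ^ 2 * ‖W - WPGD‖ ^ 2 := by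
      intro t ht0 ht1
      have hmem : (1 - t) • WPGD + t • W ∈ WsetE Imax :=
        hKconv hWPGD hW (by linarith) ht0 (by ring)
      have h := hproj _ hmem
      have h2 : ‖WPGD - u‖ ^ 2 ≤ ‖(1 - t) • WPGD + t • W - u‖ ^ 2 :=
        pow_le_pow_left₀ (norm_nonneg _) h 2
      have hexp : (1 - t) • WPGD + t • W - u = (WPGD - u) + t • (W - WPGD) := by
        rw [smul_sub]; module
      rw [hexp] at h2
      have hnorm : ‖(WPGD - u) + t • (W - WPGD)‖ ^ 2
          = ‖WPGD - u‖ ^ 2 + 2 * t * ⟪WPGD - u, W - WPGD⟫ + t ^ 2 * ‖W - WPGD‖ ^ 2 := by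
        rw [norm_add_sq_real, real_inner_smul_right, norm_smul, Real.norm_eq_abs,
          abs_of_nonneg ht0]
        ring
      rw [hnorm] at h2
      have hflip : ⟪WPGD - u, W - WPGD⟫ = -⟪u - WPGD, W - WPGD⟫ := by
        rw [show WPGD - u = -(u - WPGD) by abel, inner_neg_left]
      rw [hflip] at h2
      linarith
    by_contra hcon
    push_neg at hcon
    have hq0 : (0:ℝ) ≤ ‖W - WPGD‖ ^ 2 := sq_nonneg _
    rcases eq_or_lt_of_le hq0 with hq | hq
    · have hW0 : W - WPGD = 0 :=
        norm_eq_zero.mp ((pow_eq_zero_iff (two_ne_zero)).mp hq.symm)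
      rw [hW0, inner_zero_right] at hcon
      exact lt_irrefl _ hcon
    · have hpq : 0 < ⟪u - WPGD, W - WPGD⟫ / ‖W - WPGD‖ ^ 2 := div_pos hcon hq
      have ht0 : 0 < min 1 (⟪u - WPGD, W - WPGD⟫ / ‖W - WPGD‖ ^ 2) := lt_min one_pos hpq
      have ht1 : min 1 (⟪u - WPGD, W - WPGD⟫ / ‖W - WPGD‖ ^ 2) ≤ 1 := min_le_left _ _
      have h2 := hkey _ ht0.le ht1
      have htq : min 1 (⟪u - WPGD, W - WPGD⟫ / ‖W - WPGD‖ ^ 2) * ‖W - WPGD‖ ^ 2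
          ≤ ⟪u - WPGD, W - WPGD⟫ := by
        calc min 1 (⟪u - WPGD, W - WPGD⟫ / ‖W - WPGD‖ ^ 2) * ‖W - WPGD‖ ^ 2
            ≤ (⟪u - WPGD, W - WPGD⟫ / ‖W - WPGD‖ ^ 2) * ‖W - WPGD‖ ^ 2 :=
              mul_le_mul_of_nonneg_right (min_le_right _ _) hq0
          _ = ⟪u - WPGD, W - WPGD⟫ := div_mul_cancel₀ _ hq.ne'
      nlinarith [h2, mul_le_mul_of_nonneg_left htq ht0.le, mul_pos ht0 hcon]
  -- descent step
  obtain ⟨d, hd⟩ : ∃ d : FrobSpace, d = WPGD - Wk := ⟨_, rfl⟩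
  have hdesc := descent_lemma' f hfdiff L hlip Wk WPGD
  have hWkchar := hchar Wk hWk
  have hue : u - WPGD = -d - α • gradient f Wk := by rw [hu, hd]; abel
  have hWkW : Wk - WPGD = -d := by rw [hd]; abel
  rw [hue, hWkW] at hWkchar
  have hipEq : ⟪-d - α • gradient f Wk, -d⟫
      = ‖d‖ ^ 2 + α * ⟪gradient f Wk, d⟫ := by
    rw [inner_sub_left, inner_neg_neg, inner_neg_right, real_inner_smul_left,
      real_inner_self_eq_norm_sq]
    ring
  rw [hipEq] at hWkchar
  have hLpos : (0 : ℝ) < L := by exact_mod_cast hL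
  have hαLle : α * (L : ℝ) ≤ 1 := by
    calc α * (L : ℝ) ≤ (1 / (L : ℝ)) * (L : ℝ) :=
          mul_le_mul_of_nonneg_right hαL hLpos.le
      _ = 1 := by field_simp
  have key : α * f WPGD + ‖d‖ ^ 2 / 2 ≤ α * f Wk := by
    have A : α * f WPGD
        ≤ α * (f Wk + ⟪gradient f Wk, WPGD - Wk⟫ + (L : ℝ) / 2 * ‖WPGD - Wk‖ ^ 2) :=
      mul_le_mul_of_nonneg_left hdesc hα₀.le
    have B : α * (L : ℝ) * ‖d‖ ^ 2 ≤ 1 * ‖d‖ ^ 2 :=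
      mul_le_mul_of_nonneg_right hαLle (sq_nonneg ‖d‖)
    rw [← hd] at A
    nlinarith [A, B, hWkchar]
  have h2 : f WPGD ≤ f Wk := by
    have hm : α * f WPGD ≤ α * f Wk := by nlinarith [key, sq_nonneg ‖d‖]
    exact (mul_le_mul_iff_right₀ hα₀).mp hm
  refine ⟨h1, h2, ?_⟩
  -- Part 3 : stall implies global optimality
  intro heq W hW
  have hfP : f Wk ≤ f WPGD := by rw [← heq]; exact h1
  have hn0 : ‖d‖ ^ 2 ≤ 0 := by
    nlinarith [key, mul_le_mul_of_nonneg_left hfP hα₀.le]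
  have hdeq : WPGD = Wk := by
    have hnd : ‖d‖ = 0 := by nlinarith [norm_nonneg d]
    have hd0 : d = 0 := norm_eq_zero.mp hnd
    have : WPGD - Wk = 0 := by rw [← hd]; exact hd0
    exact sub_eq_zero.mp this
  have hch := hchar W hW
  rw [hdeq] at hch
  have hue2 : u - Wk = -(α • gradient f Wk) := by rw [hu]; abel
  rw [hue2, inner_neg_left, real_inner_smul_left] at hch
  have hnn : 0 ≤ ⟪gradient f Wk, W - Wk⟫ := by
    rcases le_or_gt 0 ⟪gradient f Wk, W - Wk⟫ with h | h
    · exact h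
    · exfalso; nlinarith [mul_pos hα₀ (neg_pos.mpr h)]
  have hfo := convex_first_order' f hfconv hfdiff Wk W
  linarith
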